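/- Let C : Fin n₁ → Fin n₂ → Fin n₃ → ℝ be a third-order tensor and G : Matrix (Fin n₂) (Fin n₂) ℝ. Define the tensor 𝓖 : Fin n₂ → Fin n₂ → Fin n₃ → ℝ by 𝓖(p,j,0) = G(j,p) and 𝓖(p,j,k) = 0 for k ≠ 0 (its first frontal slice is Gᵀ and all other frontal slices are zero). Then C *₃ 𝓖 = C ×₂ G, i.e. for all i, j, k: Σ_{p=0}^{n₂−1} Σ_{s=0}^{n₃−1} C(i,p,s)·𝓖(p,j,(k−s) mod n₃) = Σ_{p=0}^{n₂−1} G(j,p)·C(i,p,k). -/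

import Mathlib

/-- If the first frontal slice of `𝓖` is `Gᵀ` and all its other frontal slices are
zero, then the mode-3 t-product `C *₃ 𝓖` equals the mode-2 matrix product `C ×₂ G`
(entrywise). -/
theorem tprod3_eq_mode2_mul (n₁ n₂ n₃ : ℕ) (C : Fin n₁ → Fin n₂ → Fin n₃ → ℝ)
    (G : Matrix (Fin n₂) (Fin n₂) ℝ)
    (𝓖 : Fin n₂ → Fin n₂ → Fin n₃ → ℝ)
    (h𝓖 : ∀ p j k, 𝓖 p j k = if (k : ℕ) = 0 then G j p else 0)
    (i : Fin n₁) (j : Fin n₂) (k : Fin n₃) :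
    (∑ p : Fin n₂, ∑ s : Fin n₃, C i p s * 𝓖 p j (k - s))
      = ∑ p : Fin n₂, G j p * C i p k := by
  haveI : NeZero n₃ := ⟨k.pos.ne'⟩
  refine Finset.sum_congr rfl fun p _ => ?_
  rw [Finset.sum_eq_single k]
  · simp [h𝓖, mul_comm]
  · intro s _ hs
    have : k - s ≠ 0 := by
      intro h
      exact hs (by rwa [sub_eq_zero, eq_comm] at h)
    rw [h𝓖, if_neg, mul_zero]
    intro h
    apply this
    ext
    rw [h]
    simp
  · simp
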